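/- Let R = F_2[x_1, ..., x_k] with k ≥ n+1, and for each i let Q_i : R → R be the F_2-linear derivation with Q_i(x_j) = x_j^{2^{i+1}}. Then for m with n+1 ≤ m ≤ k, the element Q_n Q_{n-1} ⋯ Q_0 (x_1 ⋯ x_m) is nonzero in R. -/

import Mathlib

open MvPolynomial

/-- The composite `Q n ∘ Q (n-1) ∘ ⋯ ∘ Q 0`. -/
def compQ {A : Type*} (Q : ℕ → A → A) : ℕ → A → A
  | 0 => Q 0
  | n + 1 => Q (n + 1) ∘ compQ Q n

theorem deriv_sum_apply {R A M : Type*} [CommSemiring R] [CommSemiring A] [Algebra R A]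
    [AddCommMonoid M] [Module A M] [Module R M] {ι : Type*} (s : Finset ι)
    (D : ι → Derivation R A M) (a : A) : (∑ i ∈ s, D i) a = ∑ i ∈ s, D i a := by
  classical
  induction s using Finset.induction with
  | empty => simp
  | insert _ _ h ih => simp [Finset.sum_insert h, ih]

theorem coeff_pderiv' {σ : Type*} {R : Type*} [CommSemiring R] (j : σ) (c : σ →₀ ℕ)
    (f : MvPolynomial σ R) :
    coeff c (pderiv j f) = ((c j : R) + 1) * coeff (c + Finsupp.single j 1) f := by
  classical
  induction f using MvPolynomial.induction_on' with
  | monomial s a =>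
    rw [pderiv_monomial, coeff_monomial, coeff_monomial]
    by_cases h : s = c + Finsupp.single j 1
    · subst h
      have h1 : ((c + Finsupp.single j 1) - Finsupp.single j 1) = c :=
        add_tsub_cancel_right c (Finsupp.single j 1)
      have hsj : (c + Finsupp.single j 1 : σ →₀ ℕ) j = c j + 1 := by simp
      rw [if_pos h1, if_pos rfl, hsj]
      push_cast; ring
    · rw [if_neg h]
      by_cases h2 : (s - Finsupp.single j 1) = c
      · rw [if_pos h2]
        by_cases h3 : s j = 0
        · simp [h3]
        · exfalso
          apply h
          rw [← h2, tsub_add_cancel_of_le]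
          rwa [Finsupp.single_le_iff, Nat.one_le_iff_ne_zero]
      · rw [if_neg h2, mul_zero]
  | add p q hp hq => simp [map_add, hp, hq, mul_add]

noncomputable def dd (k m : ℕ) (r : ℕ) : Fin k →₀ ℕ :=
  Finsupp.equivFunOnFinite.symm
    (fun j => if (j : ℕ) < m then (if (j : ℕ) < r then 2 ^ ((j : ℕ) + 1) else 1) else 0)

theorem dd_apply (k m r : ℕ) (j : Fin k) :
    dd k m r j = if (j : ℕ) < m then (if (j : ℕ) < r then 2 ^ ((j : ℕ) + 1) else 1) else 0 := rfl

theorem prod_X_eq (k m : ℕ) (hmk : m ≤ k) :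
    (∏ i : Fin m, X (Fin.castLE hmk i) : MvPolynomial (Fin k) (ZMod 2)) =
      monomial (dd k m 0) 1 := by
  have h : ∀ s : Finset (Fin m),
      (∏ i ∈ s, X (Fin.castLE hmk i) : MvPolynomial (Fin k) (ZMod 2)) =
        monomial (∑ i ∈ s, Finsupp.single (Fin.castLE hmk i) 1) 1 := by
    intro s
    induction s using Finset.induction with
    | empty => simp
    | insert _ _ h ih =>
      rw [Finset.prod_insert h, Finset.sum_insert h, ih, X, monomial_mul, one_mul]
  rw [h]
  have he : (∑ i : Fin m, Finsupp.single (Fin.castLE hmk i) 1) = dd k m 0 := by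
    ext j
    rw [dd_apply, Finsupp.finset_sum_apply]
    by_cases hj : (j : ℕ) < m
    · rw [if_pos hj, if_neg (Nat.not_lt_zero _)]
      rw [Finset.sum_eq_single (⟨(j : ℕ), hj⟩ : Fin m)]
      · simp [Fin.castLE, Fin.ext_iff]
      · intro b _ hb
        rw [Finsupp.single_apply, if_neg]
        intro hc
        apply hb
        have : (b : ℕ) = (j : ℕ) := by
          have := congrArg (fun x : Fin k => (x : ℕ)) hc
          simpa using this
        exact Fin.ext this
      · intro h'; exact absurd (Finset.mem_univ _) h'
    · rw [if_neg hj]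
      apply Finset.sum_eq_zero
      intro b _
      rw [Finsupp.single_apply, if_neg]
      intro hc
      apply hj
      have : (b : ℕ) = (j : ℕ) := by
        have := congrArg (fun x : Fin k => (x : ℕ)) hc
        simpa using this
      rw [← this]; exact b.isLt
  rw [he]

theorem key_step (k m : ℕ) (hmk : m ≤ k) (r : ℕ) (hr : r < m)
    (D : Derivation (ZMod 2) (MvPolynomial (Fin k) (ZMod 2)) (MvPolynomial (Fin k) (ZMod 2)))
    (hD : ∀ j, D (X j) = X j ^ 2 ^ (r + 1)) (f : MvPolynomial (Fin k) (ZMod 2)) :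
    coeff (dd k m (r + 1)) (D f) = coeff (dd k m r) f := by
  classical
  set e : ℕ := 2 ^ (r + 1) with he
  have hDeq : D = ∑ j : Fin k, (X j ^ e : MvPolynomial (Fin k) (ZMod 2)) • pderiv j := by
    apply derivation_ext
    intro p
    rw [deriv_sum_apply]
    rw [hD]
    rw [Finset.sum_eq_single p]
    · rw [Derivation.smul_apply, pderiv_X_self, smul_eq_mul, mul_one]
    · intro b _ hb
      rw [Derivation.smul_apply, pderiv_X_of_ne (Ne.symm hb), smul_zero]
    · intro h'; exact absurd (Finset.mem_univ _) h'
  rw [hDeq, deriv_sum_apply]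
  rw [MvPolynomial.coeff_sum]
  have hj0 : r < k := lt_of_lt_of_le hr hmk
  set j0 : Fin k := ⟨r, hj0⟩ with hj0def
  have hterm : ∀ j : Fin k, coeff (dd k m (r + 1))
      (((X j ^ e : MvPolynomial (Fin k) (ZMod 2)) • pderiv j) f) =
      if Finsupp.single j e ≤ dd k m (r + 1) then
        coeff (dd k m (r + 1) - Finsupp.single j e) (pderiv j f) else 0 := by
    intro j
    rw [Derivation.smul_apply, smul_eq_mul, mul_comm, X_pow_eq_monomial,
      coeff_mul_monomial']
    split <;> simp
  simp only [hterm]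
  rw [Finset.sum_eq_single j0]
  · have hle : Finsupp.single j0 e ≤ dd k m (r + 1) := by
      rw [Finsupp.single_le_iff, dd_apply]
      simp only [hj0def]
      rw [if_pos hr, if_pos (Nat.lt_succ_self r)]
    rw [if_pos hle, coeff_pderiv']
    have hc0 : (dd k m (r + 1) - Finsupp.single j0 e) j0 = 0 := by
      rw [Finsupp.tsub_apply, Finsupp.single_apply, if_pos rfl, dd_apply]
      simp only [hj0def]
      rw [if_pos hr, if_pos (Nat.lt_succ_self r)]
      rw [← he, Nat.sub_self]
    have hcd : (dd k m (r + 1) - Finsupp.single j0 e) + Finsupp.single j0 1 = dd k m r := by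
      ext j
      rw [Finsupp.add_apply, Finsupp.tsub_apply, Finsupp.single_apply, Finsupp.single_apply,
        dd_apply, dd_apply]
      by_cases hj : j0 = j
      · subst hj
        simp only [if_pos rfl, hj0def]
        rw [if_pos hr, if_pos hr, if_pos (Nat.lt_succ_self r), if_neg (lt_irrefl r)]
        simp [← he]
      · rw [if_neg hj, if_neg hj, Nat.sub_zero, Nat.add_zero]
        have hne : (j : ℕ) ≠ r := by
          intro hcc
          exact hj (Fin.ext (by simp [hj0def, hcc]))
        by_cases hjm : (j : ℕ) < m
        · rw [if_pos hjm, if_pos hjm]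
          by_cases hjr : (j : ℕ) < r
          · rw [if_pos hjr, if_pos (by omega)]
          · rw [if_neg hjr, if_neg (by omega)]
        · rw [if_neg hjm, if_neg hjm]
    rw [hc0, hcd]
    norm_num
  · intro b _ hb
    rw [if_neg]
    rw [Finsupp.single_le_iff, dd_apply]
    have hbne : (b : ℕ) ≠ r := fun hcc => hb (Fin.ext (by simp [hj0def, hcc]))
    by_cases hbm : (b : ℕ) < m
    · rw [if_pos hbm]
      by_cases hbr : (b : ℕ) < r + 1
      · rw [if_pos hbr]
        intro hcontra
        have h1 : (b : ℕ) + 1 < r + 1 := by omega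
        have := Nat.pow_lt_pow_right (a := 2) one_lt_two h1
        omega
      · rw [if_neg hbr]
        intro hcontra
        have := Nat.one_lt_two_pow (n := r + 1) (by omega)
        omega
    · rw [if_neg hbm]
      intro hcontra
      have := Nat.pow_pos (n := r + 1) (show 0 < 2 by omega)
      omega
  · intro h'; exact absurd (Finset.mem_univ _) h'

theorem stmt_7 (k n m : ℕ) (hkn : n + 1 ≤ k) (hnm : n + 1 ≤ m) (hmk : m ≤ k)
    (Q : ℕ → Derivation (ZMod 2) (MvPolynomial (Fin k) (ZMod 2))
      (MvPolynomial (Fin k) (ZMod 2)))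
    (hQ : ∀ (i : ℕ) (j : Fin k), Q i (X j) = X j ^ 2 ^ (i + 1)) :
    compQ (fun i f => Q i f) n (∏ i : Fin m, X (Fin.castLE hmk i)) ≠ 0 := by
  intro h0
  set P : MvPolynomial (Fin k) (ZMod 2) := ∏ i : Fin m, X (Fin.castLE hmk i) with hP
  have claim : ∀ r, r + 1 ≤ m → coeff (dd k m (r + 1)) (compQ (fun i f => Q i f) r P) = 1 := by
    intro r
    induction r with
    | zero =>
      intro hr
      show coeff (dd k m 1) (Q 0 P) = 1
      rw [key_step k m hmk 0 (by omega) (Q 0) (fun j => hQ 0 j) P]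
      rw [hP, prod_X_eq k m hmk, coeff_monomial, if_pos rfl]
    | succ r ih =>
      intro hr
      show coeff (dd k m (r + 2)) (Q (r + 1) (compQ (fun i f => Q i f) r P)) = 1
      rw [key_step k m hmk (r + 1) (by omega) (Q (r + 1)) (fun j => hQ (r + 1) j)]
      exact ih (by omega)
  have hc := claim n hnm
  rw [h0] at hc
  simp at hc
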